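/- Let ω = ℝ^ℕ carry the product topology and let A be a continuous linear operator on ω. If A generates a strongly continuous semigroup on ω, then A² also generates a strongly continuous semigroup on ω. -/

import Mathlib

open Filter Topology Set


/-- Local equicontinuity: rows of `T t`, `t ∈ [0,1]`, are supported in a common finite set. -/
lemma equi (T : ℝ → (ℕ → ℝ) →L[ℝ] (ℕ → ℝ))
    (hc : ∀ x : ℕ → ℝ, ContinuousOn (fun t : ℝ => T t x) (Set.Ici 0)) (n : ℕ) :
    ∃ F : Finset ℕ, ∀ t ∈ Set.Icc (0:ℝ) 1, ∀ x : ℕ → ℝ,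
      (∀ m ∈ F, x m = 0) → T t x n = 0 := by
  set 𝓕 : Set.Icc (0:ℝ) 1 → (ℕ → ℝ) →L[ℝ] ℝ :=
    fun t => (ContinuousLinearMap.proj n).comp (T t) with h𝓕
  have hue : UniformEquicontinuous ((↑) ∘ 𝓕) := by
    apply (norm_withSeminorms ℝ ℝ).banach_steinhaus
    intro k x
    have hcont : ContinuousOn (fun t : ℝ => T t x n) (Set.Icc (0:ℝ) 1) := by
      exact ((continuous_apply n).comp_continuousOn ((hc x).mono (Set.Icc_subset_Ici_self)))
    have hb : IsCompact ((fun t : ℝ => T t x n) '' Set.Icc 0 1) :=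
      (isCompact_Icc).image_of_continuousOn hcont
    have hbdd := hb.isBounded
    rcases hbdd.subset_closedBall (0:ℝ) with ⟨r, hr⟩
    refine ⟨r, ?_⟩
    rintro y ⟨t, rfl⟩
    have : T (t:ℝ) x n ∈ Metric.closedBall (0:ℝ) r := hr ⟨t, t.2, rfl⟩
    simpa [𝓕, Seminorm.comp_apply] using mem_closedBall_zero_iff.mp this
  have heq : EquicontinuousAt (DFunLike.coe ∘ 𝓕) 0 :=
    hue.equicontinuous 0
  have hU : {p : ℝ × ℝ | dist p.1 p.2 < 1} ∈ uniformity ℝ :=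
    Metric.dist_mem_uniformity one_pos
  have := heq _ hU
  -- `this : ∀ᶠ x in 𝓝 0, ∀ i, (𝓕 i 0, 𝓕 i x) ∈ ...`
  rw [nhds_pi] at this
  rcases Filter.mem_pi.mp this with ⟨I, hIfin, V, hV, hVsub⟩
  refine ⟨hIfin.toFinset, ?_⟩
  rintro t ht x hx
  have key : ∀ c : ℝ, |T t x n| * c ≤ 1 := by
    intro c
    rcases le_or_gt c 0 with hc | hc
    · calc |T t x n| * c ≤ 0 := mul_nonpos_of_nonneg_of_nonpos (abs_nonneg _) hc
        _ ≤ 1 := zero_le_one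
    · have hmem : c • x ∈ I.pi V := by
        intro m hm
        have : x m = 0 := hx m (hIfin.mem_toFinset.mpr hm)
        simp only [Pi.smul_apply, this, smul_zero]
        exact mem_of_mem_nhds (hV m)
      have h2 := hVsub hmem ⟨t, ht⟩
      have h2' : dist ((𝓕 ⟨t, ht⟩) (0:ℕ→ℝ)) ((𝓕 ⟨t, ht⟩) (c • x)) < 1 := h2
      rw [map_zero] at h2'
      have : |c| * |T t x n| ≤ 1 := by
        have := le_of_lt h2'
        simpa [h𝓕, ContinuousLinearMap.proj_apply, dist_eq_norm, map_smul] using this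
      calc |T t x n| * c = |c| * |T t x n| := by
            rw [abs_of_pos hc]; ring
        _ ≤ 1 := this
  by_contra h0
  have hpos : 0 < |T t x n| := abs_pos.mpr h0
  have := key (2 / |T t x n|)
  rw [mul_comm, div_mul_cancel₀ _ (ne_of_gt hpos)] at this
  linarith

lemma zeroprop (A : (ℕ → ℝ) →L[ℝ] (ℕ → ℝ)) (T : ℝ → (ℕ → ℝ) →L[ℝ] (ℕ → ℝ))
    (hT0 : T 0 = ContinuousLinearMap.id ℝ (ℕ → ℝ))
    (hsg : ∀ s t : ℝ, 0 ≤ s → 0 ≤ t → T (s + t) = (T s).comp (T t))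
    (hgenA : ∀ x : ℕ → ℝ, Tendsto (fun h : ℝ => h⁻¹ • (T h x - x)) (𝓝[>] 0) (𝓝 (A x)))
    (n : ℕ) (F : Finset ℕ)
    (hF : ∀ t ∈ Set.Icc (0:ℝ) 1, ∀ x : ℕ → ℝ, (∀ m ∈ F, x m = 0) → T t x n = 0) :
    ∀ x : ℕ → ℝ, (∀ m ∈ F, x m = 0) → ∀ k : ℕ, ((A ^ k) x) n = 0 := by
  have main : ∀ y : ℕ → ℝ, (∀ t ∈ Set.Ico (0:ℝ) 1, T t y n = 0) →
      ∀ t ∈ Set.Ico (0:ℝ) 1, T t (A y) n = 0 := by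
    intro y hy t ht
    have h1 : Tendsto (fun h : ℝ => T t (h⁻¹ • (T h y - y)) n) (𝓝[>] 0)
        (𝓝 (T t (A y) n)) := by
      have hcont : Continuous (fun z : ℕ → ℝ => T t z n) :=
        (continuous_apply n).comp (T t).continuous
      exact (hcont.tendsto _).comp (hgenA y)
    have h2 : ∀ᶠ h : ℝ in 𝓝[>] 0, T t (h⁻¹ • (T h y - y)) n = 0 := by
      have hmem : Set.Ioo (0:ℝ) (1 - t) ∈ 𝓝[>] (0:ℝ) :=
        Ioo_mem_nhdsGT_of_mem ⟨le_refl _, by linarith [ht.2]⟩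
      filter_upwards [hmem] with h hh
      have hTt : T t (T h y) = T (t + h) y := by
        rw [hsg t h ht.1 (le_of_lt hh.1)]; rfl
      have e1 : T (t + h) y n = 0 := hy (t + h) ⟨by linarith [ht.1, hh.1], by linarith [hh.2]⟩
      have e2 : T t y n = 0 := hy t ht
      rw [map_smul, map_sub, hTt]
      simp [e1, e2]
    have h3 : Tendsto (fun h : ℝ => T t (h⁻¹ • (T h y - y)) n) (𝓝[>] 0) (𝓝 0) := by
      rw [tendsto_congr' h2]; exact tendsto_const_nhds
    exact (tendsto_nhds_unique h1 h3).symm ▸ rfl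
  intro x hx
  have claim : ∀ k : ℕ, ∀ t ∈ Set.Ico (0:ℝ) 1, T t ((A ^ k) x) n = 0 := by
    intro k
    induction k with
    | zero => intro t ht; exact hF t ⟨ht.1, le_of_lt ht.2⟩ x hx
    | succ k ih =>
      have : ∀ t ∈ Set.Ico (0:ℝ) 1, T t (A ((A ^ k) x)) n = 0 := main _ ih
      intro t ht
      have hpow : (A ^ (k+1)) x = A ((A ^ k) x) := by
        rw [pow_succ']; rfl
      rw [hpow]; exact this t ht
  intro k
  have h0 := claim k 0 ⟨le_refl _, one_pos⟩
  rw [hT0] at h0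
  exact h0

section Rec
variable (A : (ℕ → ℝ) →L[ℝ] (ℕ → ℝ)) (n : ℕ) (F : Finset ℕ)

noncomputable def extF : ({m // m ∈ F} → ℝ) →ₗ[ℝ] (ℕ → ℝ) where
  toFun v := fun m => if h : m ∈ F then v ⟨m, h⟩ else 0
  map_add' v w := by funext m; by_cases h : m ∈ F <;> simp [h]
  map_smul' c v := by funext m; by_cases h : m ∈ F <;> simp [h]

noncomputable def lamF (k : ℕ) : Module.Dual ℝ ({m // m ∈ F} → ℝ) :=
  (LinearMap.proj n) ∘ₗ ((A ^ k : (ℕ → ℝ) →L[ℝ] (ℕ → ℝ)) : (ℕ → ℝ) →ₗ[ℝ] (ℕ → ℝ)) ∘ₗ extF F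

lemma lamF_apply (k : ℕ) (v : {m // m ∈ F} → ℝ) :
    lamF A n F k v = ((A ^ k) (extF F v)) n := rfl

variable {A n F} (hA : ∀ x : ℕ → ℝ, (∀ m ∈ F, x m = 0) → ∀ k : ℕ, ((A ^ k) x) n = 0)
include hA

lemma compat (x : ℕ → ℝ) (k : ℕ) :
    ((A ^ k) x) n = lamF A n F k (fun m => x m.1) := by
  have hz : ∀ m ∈ F, (x - extF F (fun m => x m.1)) m = 0 := by
    intro m hm
    simp [extF, hm]
  have := hA _ hz k
  rw [map_sub] at this
  have : ((A ^ k) x) n - ((A ^ k) (extF F (fun m => x m.1))) n = 0 := this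
  rw [lamF_apply]; linarith

lemma lam_shift (k : ℕ) (v : {m // m ∈ F} → ℝ) :
    lamF A n F (k + 1) v = lamF A n F k (fun m => (A (extF F v)) m.1) := by
  rw [lamF_apply]
  have h1 : (A ^ (k + 1)) (extF F v) = (A ^ k) (A (extF F v)) := by
    rw [pow_succ]; rfl
  rw [h1]
  exact compat hA (A (extF F v)) k

lemma exists_recurrence :
    ∃ p : ℕ, 0 < p ∧ ∃ c : Fin p → ℝ,
      ∀ (x : ℕ → ℝ) (k : ℕ), ((A ^ (k + p)) x) n = ∑ j, c j * ((A ^ (k + (j : ℕ))) x) n := by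
  classical
  set lam := lamF A n F with hlam
  -- the chain of spans stabilizes
  have hmono : Monotone (fun k : ℕ => Submodule.span ℝ (lam '' Set.Iic k)) := by
    intro a b hab
    exact Submodule.span_mono (Set.image_mono (Set.Iic_subset_Iic.mpr hab))
  obtain ⟨K, hK⟩ := (monotone_stabilizes_iff_noetherian.mpr inferInstance)
    ⟨fun k => Submodule.span ℝ (lam '' Set.Iic k), hmono⟩
  have hmem : lam (K + 1) ∈ Submodule.span ℝ (lam '' Set.Iic K) := by
    have h1 : lam (K + 1) ∈ Submodule.span ℝ (lam '' Set.Iic (K + 1)) :=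
      Submodule.subset_span ⟨K + 1, Set.mem_Iic.mpr (le_refl _), rfl⟩
    have h2 : Submodule.span ℝ (lam '' Set.Iic K) = Submodule.span ℝ (lam '' Set.Iic (K + 1)) :=
      hK (K + 1) (Nat.le_succ K)
    rw [h2]; exact h1
  have himg : lam '' Set.Iic K = Set.range (fun j : Fin (K + 1) => lam j) := by
    ext φ
    constructor
    · rintro ⟨m, hm, rfl⟩; exact ⟨⟨m, Nat.lt_succ_of_le hm⟩, rfl⟩
    · rintro ⟨j, rfl⟩; exact ⟨j, Nat.lt_succ_iff.mp j.2, rfl⟩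
  rw [himg] at hmem
  obtain ⟨c, hc⟩ := (Finsupp.mem_span_range_iff_exists_finsupp).mp hmem
  -- turn into a plain function sum
  set cc : Fin (K + 1) → ℝ := fun j => c j with hcc
  have hcsum : ∑ j, cc j • lam j = lam (K + 1) := by
    rw [← hc, Finsupp.sum_fintype]
    intro i; exact zero_smul ℝ _
  refine ⟨K + 1, Nat.succ_pos K, cc, ?_⟩
  -- propagate the relation
  have hprop : ∀ k : ℕ, ∀ v : {m // m ∈ F} → ℝ,
      lam (k + (K + 1)) v = ∑ j, cc j * lam (k + (j : ℕ)) v := by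
    intro k
    induction k with
    | zero =>
      intro v
      have := congrArg (fun φ => φ v) hcsum
      simp only [LinearMap.sum_apply, LinearMap.smul_apply, smul_eq_mul] at this
      simpa using this.symm
    | succ k ih =>
      intro v
      have e1 : k + 1 + (K + 1) = (k + (K + 1)) + 1 := by ring
      rw [e1, lam_shift hA]
      rw [ih]
      congr 1
      funext j
      congr 1
      have e2 : k + (j : ℕ) + 1 = (k + 1) + (j : ℕ) := by ring
      rw [← lam_shift hA, e2]
  intro x k
  have h1 := compat hA x (k + (K + 1))
  rw [h1, hprop k]
  congr 1
  funext j
  rw [← compat hA x (k + (j : ℕ))]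
end Rec

lemma growth (A : (ℕ → ℝ) →L[ℝ] (ℕ → ℝ)) (n : ℕ) (p : ℕ) (hp : 0 < p) (c : Fin p → ℝ)
    (hr : ∀ (x : ℕ → ℝ) (k : ℕ), ((A ^ (k + p)) x) n = ∑ j, c j * ((A ^ (k + (j : ℕ))) x) n)
    (x : ℕ → ℝ) :
    ∃ C R : ℝ, 0 ≤ C ∧ 1 ≤ R ∧ ∀ k : ℕ, |((A ^ k) x) n| ≤ C * R ^ k := by
  classical
  set C : ℝ := ∑ j ∈ Finset.range p, |((A ^ j) x) n| with hC
  set R : ℝ := 1 + ∑ j : Fin p, |c j| with hR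
  have hC0 : 0 ≤ C := Finset.sum_nonneg fun _ _ => abs_nonneg _
  have hR1 : 1 ≤ R := le_add_of_nonneg_right (Finset.sum_nonneg fun _ _ => abs_nonneg _)
  refine ⟨C, R, hC0, hR1, ?_⟩
  intro k
  induction k using Nat.strong_induction_on with
  | _ k ih =>
    by_cases hk : k < p
    · have h1 : |((A ^ k) x) n| ≤ C :=
        Finset.single_le_sum (f := fun j => |((A ^ j) x) n|)
          (fun _ _ => abs_nonneg _) (Finset.mem_range.mpr hk)
      calc |((A ^ k) x) n| ≤ C := h1
        _ = C * 1 := (mul_one C).symm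
        _ ≤ C * R ^ k := mul_le_mul_of_nonneg_left (one_le_pow₀ hR1) hC0
    · push_neg at hk
      set m := k - p with hm
      have hmp : m + p = k := Nat.sub_add_cancel hk
      have hk1 : 1 ≤ k := le_trans hp hk
      obtain ⟨q, rfl⟩ : ∃ q, k = q + 1 := ⟨k - 1, by omega⟩
      have key : ((A ^ (q + 1)) x) n = ∑ j, c j * ((A ^ (m + (j : ℕ))) x) n := by
        rw [← hmp]; exact hr x m
      rw [key]
      have hbound : ∀ j : Fin p, |c j * ((A ^ (m + (j : ℕ))) x) n| ≤ |c j| * (C * R ^ q) := by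
        intro j
        rw [abs_mul]
        apply mul_le_mul_of_nonneg_left _ (abs_nonneg _)
        have hlt : m + (j : ℕ) < q + 1 := by omega
        have hle : m + (j : ℕ) ≤ q := by omega
        calc |((A ^ (m + (j : ℕ))) x) n| ≤ C * R ^ (m + (j : ℕ)) := ih _ hlt
          _ ≤ C * R ^ q :=
            mul_le_mul_of_nonneg_left (pow_le_pow_right₀ hR1 hle) hC0
      calc |∑ j, c j * ((A ^ (m + (j : ℕ))) x) n|
          ≤ ∑ j, |c j * ((A ^ (m + (j : ℕ))) x) n| := Finset.abs_sum_le_sum_abs _ _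
        _ ≤ ∑ j, |c j| * (C * R ^ q) := Finset.sum_le_sum fun j _ => hbound j
        _ = (∑ j, |c j|) * (C * R ^ q) := by rw [← Finset.sum_mul]
        _ ≤ R * (C * R ^ q) := by
            apply mul_le_mul_of_nonneg_right _ (by positivity)
            rw [hR]; linarith [Finset.sum_nonneg (fun (j : Fin p) (_ : j ∈ Finset.univ) => abs_nonneg (c j))]
        _ = C * R ^ (q + 1) := by rw [pow_succ]; ring

section Scalar
variable {a : ℕ → ℝ} {C R : ℝ}

lemma scalar_summable (hC : 0 ≤ C) (hR : 1 ≤ R) (ha : ∀ k : ℕ, |a k| ≤ C * R ^ k) (t : ℝ) :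
    Summable (fun k : ℕ => t ^ k / (Nat.factorial k : ℝ) * a k) := by
  apply Summable.of_norm_bounded (g := fun k : ℕ => C * ((|t| * R) ^ k / (Nat.factorial k : ℝ)))
    ((Real.summable_pow_div_factorial (|t| * R)).mul_left C)
  intro k
  rw [Real.norm_eq_abs, abs_mul, abs_div, abs_pow, Nat.abs_cast]
  calc |t| ^ k / (Nat.factorial k : ℝ) * |a k|
      ≤ |t| ^ k / (Nat.factorial k : ℝ) * (C * R ^ k) :=
        mul_le_mul_of_nonneg_left (ha k) (by positivity)
    _ = C * ((|t| * R) ^ k / (Nat.factorial k : ℝ)) := by rw [mul_pow]; ring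

lemma scalar_zero : ∑' k : ℕ, (0:ℝ) ^ k / (Nat.factorial k : ℝ) * a k = a 0 := by
  rw [tsum_eq_single 0]
  · simp
  · intro k hk
    simp [zero_pow hk]

lemma scalar_continuous (hC : 0 ≤ C) (hR : 1 ≤ R) (ha : ∀ k : ℕ, |a k| ≤ C * R ^ k) :
    Continuous (fun t : ℝ => ∑' k : ℕ, t ^ k / (Nat.factorial k : ℝ) * a k) := by
  rw [continuous_iff_continuousAt]
  intro t0
  set M : ℝ := |t0| + 1 with hM
  have hM0 : 0 ≤ M := by positivity
  have hone : ContinuousOn (fun t : ℝ => ∑' k : ℕ, t ^ k / (Nat.factorial k : ℝ) * a k)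
      (Set.Icc (-M) M) := by
    apply continuousOn_tsum (u := fun k : ℕ => C * ((M * R) ^ k / (Nat.factorial k : ℝ)))
    · intro k
      exact (((continuous_pow k).div_const _).mul continuous_const).continuousOn
    · exact (Real.summable_pow_div_factorial (M * R)).mul_left C
    · intro k t ht
      have htM : |t| ≤ M := abs_le.mpr ⟨ht.1, ht.2⟩
      rw [Real.norm_eq_abs, abs_mul, abs_div, abs_pow, Nat.abs_cast]
      calc |t| ^ k / (Nat.factorial k : ℝ) * |a k|
          ≤ M ^ k / (Nat.factorial k : ℝ) * (C * R ^ k) := by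
            have hpk : |t| ^ k ≤ M ^ k := by gcongr
            exact mul_le_mul (by gcongr) (ha k) (abs_nonneg _) (by positivity)
        _ = C * ((M * R) ^ k / (Nat.factorial k : ℝ)) := by rw [mul_pow]; ring
  have hmem : Set.Icc (-M) M ∈ 𝓝 t0 := by
    apply Icc_mem_nhds
    · have := neg_abs_le t0; rw [hM]; linarith
    · have := le_abs_self t0; rw [hM]; linarith
  exact hone.continuousAt hmem

lemma scalar_generator (hC : 0 ≤ C) (hR : 1 ≤ R) (ha : ∀ k : ℕ, |a k| ≤ C * R ^ k) :
    Tendsto (fun h : ℝ => h⁻¹ * ((∑' k : ℕ, h ^ k / (Nat.factorial k : ℝ) * a k) - a 0))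
      (𝓝[>] (0:ℝ)) (𝓝 (a 1)) := by
  set b : ℕ → ℝ := fun k => a (k + 1) / (k + 1) with hb
  have hbbound : ∀ k : ℕ, |b k| ≤ (C * R) * R ^ k := by
    intro k
    rw [hb]
    have h1 : |a (k + 1) / ((k:ℝ) + 1)| ≤ |a (k + 1)| := by
      rw [abs_div]
      apply div_le_self (abs_nonneg _)
      rw [abs_of_pos (by positivity)]
      exact le_add_of_nonneg_left (Nat.cast_nonneg k)
    calc |a (k + 1) / ((k:ℝ) + 1)| ≤ |a (k + 1)| := h1
      _ ≤ C * R ^ (k + 1) := ha (k + 1)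
      _ = (C * R) * R ^ k := by rw [pow_succ]; ring
  have hCR : 0 ≤ C * R := by positivity
  have hGcont : Continuous (fun u : ℝ => ∑' k : ℕ, u ^ k / (Nat.factorial k : ℝ) * b k) :=
    scalar_continuous hCR hR hbbound
  have hG0 : (fun u : ℝ => ∑' k : ℕ, u ^ k / (Nat.factorial k : ℝ) * b k) 0 = a 1 := by
    simp only [scalar_zero]
    rw [hb]; norm_num
  have htends : Tendsto (fun u : ℝ => ∑' k : ℕ, u ^ k / (Nat.factorial k : ℝ) * b k)
      (𝓝[>] (0:ℝ)) (𝓝 (a 1)) := by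
    rw [← hG0]
    exact (hGcont.tendsto 0).mono_left nhdsWithin_le_nhds
  apply htends.congr'
  filter_upwards [self_mem_nhdsWithin] with h hh
  have hne : h ≠ 0 := ne_of_gt hh
  rw [Summable.tsum_eq_zero_add (scalar_summable hC hR ha h)]
  have h00 : h ^ 0 / (Nat.factorial 0 : ℝ) * a 0 = a 0 := by norm_num
  rw [h00, add_sub_cancel_left, ← tsum_mul_left]
  congr 1; funext k
  rw [hb]
  have hfac : (Nat.factorial (k + 1) : ℝ) = ((k:ℝ) + 1) * (Nat.factorial k : ℝ) := by
    rw [Nat.factorial_succ]; push_cast; ring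
  rw [hfac]
  have hk1 : ((k:ℝ) + 1) ≠ 0 := by positivity
  have hfk : (Nat.factorial k : ℝ) ≠ 0 := Nat.cast_ne_zero.mpr (Nat.factorial_ne_zero k)
  field_simp
  ring
end Scalar

lemma key_sum (s t : ℝ) (a : ℕ → ℝ) (C R : ℝ) (hC : 0 ≤ C) (hR : 1 ≤ R)
    (ha : ∀ k : ℕ, |a k| ≤ C * R ^ k) :
    ∑' m : ℕ, (s + t) ^ m / (Nat.factorial m : ℝ) * a m
      = ∑' k : ℕ, s ^ k / (Nat.factorial k : ℝ)
          * ∑' j : ℕ, t ^ j / (Nat.factorial j : ℝ) * a (k + j) := by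
  classical
  set f : ℕ × ℕ → ℝ :=
    fun p => s ^ p.1 / (Nat.factorial p.1 : ℝ)
      * (t ^ p.2 / (Nat.factorial p.2 : ℝ) * a (p.1 + p.2)) with hfdef
  have hFsum : Summable (fun k : ℕ => C * ((|s| * R) ^ k / (Nat.factorial k : ℝ))) :=
    (Real.summable_pow_div_factorial (|s| * R)).mul_left C
  have hGsum : Summable (fun j : ℕ => (|t| * R) ^ j / (Nat.factorial j : ℝ)) :=
    Real.summable_pow_div_factorial (|t| * R)
  have hf : Summable f := by
    apply Summable.of_norm_bounded
      (g := fun p : ℕ × ℕ => (C * ((|s| * R) ^ p.1 / (Nat.factorial p.1 : ℝ)))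
        * ((|t| * R) ^ p.2 / (Nat.factorial p.2 : ℝ)))
      (hFsum.mul_of_nonneg hGsum (fun k => by positivity) (fun j => by positivity))
    rintro ⟨k, j⟩
    have h1 : ‖f (k, j)‖
        = |s| ^ k / (Nat.factorial k : ℝ) * (|t| ^ j / (Nat.factorial j : ℝ) * |a (k + j)|) := by
      simp only [hfdef, Real.norm_eq_abs, abs_mul, abs_div, abs_pow, Nat.abs_cast]
    rw [h1]
    have h2 : |a (k + j)| ≤ C * (R ^ k * R ^ j) := by
      rw [← pow_add]; exact ha (k + j)
    calc |s| ^ k / (Nat.factorial k : ℝ) * (|t| ^ j / (Nat.factorial j : ℝ) * |a (k + j)|)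
        ≤ |s| ^ k / (Nat.factorial k : ℝ)
            * (|t| ^ j / (Nat.factorial j : ℝ) * (C * (R ^ k * R ^ j))) := by
          apply mul_le_mul_of_nonneg_left _ (by positivity)
          exact mul_le_mul_of_nonneg_left h2 (by positivity)
      _ = C * ((|s| * R) ^ k / (Nat.factorial k : ℝ))
            * ((|t| * R) ^ j / (Nat.factorial j : ℝ)) := by
          rw [mul_pow, mul_pow]; ring
  have hrhs : ∑' k : ℕ, s ^ k / (Nat.factorial k : ℝ)
      * ∑' j : ℕ, t ^ j / (Nat.factorial j : ℝ) * a (k + j) = ∑' p : ℕ × ℕ, f p := by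
    rw [Summable.tsum_prod' hf (fun k => hf.prod_factor k)]
    congr 1; funext k
    rw [← tsum_mul_left]
  rw [hrhs]
  -- now group by antidiagonals
  have hsig : Summable (f ∘ Finset.HasAntidiagonal.sigmaAntidiagonalEquivProd) :=
    (Equiv.summable_iff _).mpr hf
  have h3 : ∑' p : ℕ × ℕ, f p
      = ∑' (m : ℕ) (q : {q : ℕ × ℕ // q ∈ Finset.HasAntidiagonal.antidiagonal m}), f q := by
    rw [← Finset.HasAntidiagonal.sigmaAntidiagonalEquivProd.tsum_eq f]
    exact Summable.tsum_sigma' (fun m => hsig.sigma_factor m) hsig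
  rw [h3]
  congr 1; funext m
  have h4 : ∑' q : {q : ℕ × ℕ // q ∈ Finset.HasAntidiagonal.antidiagonal m}, f q
      = ∑ q ∈ Finset.HasAntidiagonal.antidiagonal m, f q := Finset.tsum_subtype _ f
  rw [h4, Finset.Nat.sum_antidiagonal_eq_sum_range_succ_mk]
  have h5 : ∀ k ∈ Finset.range (m + 1),
      f (k, m - k) = s ^ k * t ^ (m - k) * (Nat.choose m k : ℝ) / (Nat.factorial m : ℝ) * a m := by
    intro k hk
    have hkm : k ≤ m := Nat.lt_succ_iff.mp (Finset.mem_range.mp hk)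
    have hadd : k + (m - k) = m := by omega
    have hfac : ((Nat.choose m k : ℝ) * (Nat.factorial k : ℝ)) * (Nat.factorial (m - k) : ℝ)
        = (Nat.factorial m : ℝ) := by
      exact_mod_cast congrArg (Nat.cast (R := ℝ)) (Nat.choose_mul_factorial_mul_factorial hkm)
    have hk0 : (Nat.factorial k : ℝ) ≠ 0 := Nat.cast_ne_zero.mpr (Nat.factorial_ne_zero k)
    have hmk0 : (Nat.factorial (m - k) : ℝ) ≠ 0 := Nat.cast_ne_zero.mpr (Nat.factorial_ne_zero _)
    have hm0 : (Nat.factorial m : ℝ) ≠ 0 := Nat.cast_ne_zero.mpr (Nat.factorial_ne_zero m)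
    show s ^ k / (Nat.factorial k : ℝ) * (t ^ (m - k) / (Nat.factorial (m - k) : ℝ) * a (k + (m - k)))
      = s ^ k * t ^ (m - k) * (Nat.choose m k : ℝ) / (Nat.factorial m : ℝ) * a m
    rw [hadd]
    field_simp
    rw [← hfac]
    ring
  rw [Finset.sum_congr rfl h5, ← Finset.sum_mul, ← Finset.sum_div, add_pow]

section Main
variable {B : (ℕ → ℝ) →L[ℝ] (ℕ → ℝ)}
variable (hbd : ∀ (n : ℕ) (x : ℕ → ℝ), ∃ C R : ℝ, 0 ≤ C ∧ 1 ≤ R ∧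
  ∀ k : ℕ, |((B ^ k) x) n| ≤ C * R ^ k)
include hbd

lemma summable_coeff (t : ℝ) (x : ℕ → ℝ) (n : ℕ) :
    Summable (fun k : ℕ => t ^ k / (Nat.factorial k : ℝ) * ((B ^ k) x) n) := by
  obtain ⟨C, R, hC, hR, h⟩ := hbd n x
  apply Summable.of_norm_bounded (g := fun k : ℕ => C * ((|t| * R) ^ k / (Nat.factorial k : ℝ)))
    ((Real.summable_pow_div_factorial (|t| * R)).mul_left C)
  intro k
  rw [Real.norm_eq_abs, abs_mul, abs_div, abs_pow, Nat.abs_cast]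
  calc |t| ^ k / (Nat.factorial k : ℝ) * |((B ^ k) x) n|
      ≤ |t| ^ k / (Nat.factorial k : ℝ) * (C * R ^ k) := by
        apply mul_le_mul_of_nonneg_left (h k) (by positivity)
    _ = C * ((|t| * R) ^ k / (Nat.factorial k : ℝ)) := by
        rw [mul_pow]; ring

variable (B) in
noncomputable def SLaux (hbd' : ∀ (n : ℕ) (x : ℕ → ℝ), ∃ C R : ℝ, 0 ≤ C ∧ 1 ≤ R ∧
    ∀ k : ℕ, |((B ^ k) x) n| ≤ C * R ^ k) (t : ℝ) : (ℕ → ℝ) →ₗ[ℝ] (ℕ → ℝ) where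
  toFun x := fun n => ∑' k : ℕ, t ^ k / (Nat.factorial k : ℝ) * ((B ^ k) x) n
  map_add' x y := by
    funext n
    show (∑' k : ℕ, t ^ k / (Nat.factorial k : ℝ) * ((B ^ k) (x + y)) n)
      = (∑' k : ℕ, t ^ k / (Nat.factorial k : ℝ) * ((B ^ k) x) n)
        + (∑' k : ℕ, t ^ k / (Nat.factorial k : ℝ) * ((B ^ k) y) n)
    rw [← Summable.tsum_add (summable_coeff hbd' t x n) (summable_coeff hbd' t y n)]
    congr 1; funext k
    rw [map_add]; simp [Pi.add_apply]; ring
  map_smul' c x := by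
    funext n
    show (∑' k : ℕ, t ^ k / (Nat.factorial k : ℝ) * ((B ^ k) (c • x)) n)
      = (c • fun n => ∑' k : ℕ, t ^ k / (Nat.factorial k : ℝ) * ((B ^ k) x) n) n
    simp only [Pi.smul_apply, smul_eq_mul]
    rw [← tsum_mul_left]
    congr 1; funext k
    rw [map_smul]; simp [Pi.smul_apply]; ring

lemma SLaux_apply (t : ℝ) (x : ℕ → ℝ) (n : ℕ) :
    SLaux B hbd t x n = ∑' k : ℕ, t ^ k / (Nat.factorial k : ℝ) * ((B ^ k) x) n := rfl

lemma hasSum_SLaux (t : ℝ) (x : ℕ → ℝ) :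
    HasSum (fun k : ℕ => (t ^ k / (Nat.factorial k : ℝ)) • ((B ^ k) x)) (SLaux B hbd t x) := by
  rw [Pi.hasSum]
  intro n
  simpa [Pi.smul_apply, smul_eq_mul, SLaux_apply] using (summable_coeff hbd t x n).hasSum

lemma Bk_SLaux (t : ℝ) (x : ℕ → ℝ) (k n : ℕ) :
    ((B ^ k) (SLaux B hbd t x)) n
      = ∑' j : ℕ, t ^ j / (Nat.factorial j : ℝ) * ((B ^ (k + j)) x) n := by
  have h := (((ContinuousLinearMap.proj n : (ℕ → ℝ) →L[ℝ] ℝ)).comp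
    (B ^ k)).hasSum (hasSum_SLaux hbd t x)
  have h2 : HasSum (fun j : ℕ => t ^ j / (Nat.factorial j : ℝ) * ((B ^ (k + j)) x) n)
      (((B ^ k) (SLaux B hbd t x)) n) := by
    convert h using 2 with j
    rw [map_smul]
    have : (B ^ k) ((B ^ j) x) = (B ^ (k + j)) x := by
      rw [pow_add, ContinuousLinearMap.mul_apply]
    simp [this, ContinuousLinearMap.proj_apply, Function.iterate_add_apply]
    rfl
  exact h2.tsum_eq.symm

lemma cont_SLaux
    (hsupp : ∀ n : ℕ, ∃ F : Finset ℕ, ∀ x : ℕ → ℝ,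
      (∀ m ∈ F, x m = 0) → ∀ k : ℕ, ((B ^ k) x) n = 0) (t : ℝ) :
    Continuous (SLaux B hbd t) := by
  apply continuous_pi
  intro n
  obtain ⟨F, hF⟩ := hsupp n
  set res : (ℕ → ℝ) → ({m // m ∈ F} → ℝ) := fun x m => x m.1 with hres
  have hrescont : Continuous res := continuous_pi fun m => continuous_apply m.1
  set ψ : ({m // m ∈ F} → ℝ) →ₗ[ℝ] ℝ :=
    (LinearMap.proj n) ∘ₗ (SLaux B hbd t) ∘ₗ (extF F) with hψ
  have hψcont : Continuous ψ := ψ.continuous_of_finiteDimensional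
  have hfactor : (fun x : ℕ → ℝ => SLaux B hbd t x n) = fun x => ψ (res x) := by
    funext x
    show SLaux B hbd t x n = SLaux B hbd t (extF F (res x)) n
    rw [SLaux_apply, SLaux_apply]
    congr 1; funext k
    congr 1
    rw [compat hF x k, lamF_apply]
  exact hfactor ▸ hψcont.comp hrescont

variable (B) in
noncomputable def SCL
    (hbd' : ∀ (n : ℕ) (x : ℕ → ℝ), ∃ C R : ℝ, 0 ≤ C ∧ 1 ≤ R ∧
      ∀ k : ℕ, |((B ^ k) x) n| ≤ C * R ^ k)
    (hsupp : ∀ n : ℕ, ∃ F : Finset ℕ, ∀ x : ℕ → ℝ,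
      (∀ m ∈ F, x m = 0) → ∀ k : ℕ, ((B ^ k) x) n = 0) (t : ℝ) :
    (ℕ → ℝ) →L[ℝ] (ℕ → ℝ) :=
  ⟨SLaux B hbd' t, cont_SLaux hbd' hsupp t⟩

lemma SCL_apply
    (hsupp : ∀ n : ℕ, ∃ F : Finset ℕ, ∀ x : ℕ → ℝ,
      (∀ m ∈ F, x m = 0) → ∀ k : ℕ, ((B ^ k) x) n = 0) (t : ℝ) (x : ℕ → ℝ) (n : ℕ) :
    SCL B hbd hsupp t x n = ∑' k : ℕ, t ^ k / (Nat.factorial k : ℝ) * ((B ^ k) x) n := rfl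

lemma SCL_zero
    (hsupp : ∀ n : ℕ, ∃ F : Finset ℕ, ∀ x : ℕ → ℝ,
      (∀ m ∈ F, x m = 0) → ∀ k : ℕ, ((B ^ k) x) n = 0) :
    SCL B hbd hsupp 0 = ContinuousLinearMap.id ℝ (ℕ → ℝ) := by
  ext x n
  rw [SCL_apply, scalar_zero]
  simp

lemma SCL_semigroup
    (hsupp : ∀ n : ℕ, ∃ F : Finset ℕ, ∀ x : ℕ → ℝ,
      (∀ m ∈ F, x m = 0) → ∀ k : ℕ, ((B ^ k) x) n = 0) (s t : ℝ) :
    SCL B hbd hsupp (s + t) = (SCL B hbd hsupp s).comp (SCL B hbd hsupp t) := by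
  ext x n
  rw [ContinuousLinearMap.comp_apply, SCL_apply, SCL_apply]
  obtain ⟨C, R, hC, hR, ha⟩ := hbd n x
  rw [key_sum s t (fun m => ((B ^ m) x) n) C R hC hR ha]
  congr 1; funext k
  congr 1
  exact (Bk_SLaux hbd t x k n).symm

lemma SCL_orbit_continuous
    (hsupp : ∀ n : ℕ, ∃ F : Finset ℕ, ∀ x : ℕ → ℝ,
      (∀ m ∈ F, x m = 0) → ∀ k : ℕ, ((B ^ k) x) n = 0) (x : ℕ → ℝ) :
    Continuous (fun t : ℝ => SCL B hbd hsupp t x) := by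
  apply continuous_pi
  intro n
  obtain ⟨C, R, hC, hR, ha⟩ := hbd n x
  exact scalar_continuous hC hR ha

lemma SCL_generator
    (hsupp : ∀ n : ℕ, ∃ F : Finset ℕ, ∀ x : ℕ → ℝ,
      (∀ m ∈ F, x m = 0) → ∀ k : ℕ, ((B ^ k) x) n = 0) (x : ℕ → ℝ) :
    Tendsto (fun h : ℝ => h⁻¹ • (SCL B hbd hsupp h x - x)) (𝓝[>] 0) (𝓝 (B x)) := by
  rw [tendsto_pi_nhds]
  intro n
  obtain ⟨C, R, hC, hR, ha⟩ := hbd n x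
  have key := scalar_generator (a := fun k => ((B ^ k) x) n) hC hR ha
  have e0 : ((B ^ 0) x) n = x n := by simp
  have e1 : ((B ^ 1) x) n = B x n := by rw [pow_one]
  simp only [e0, e1] at key
  apply key.congr
  intro h
  simp only [SCL_apply, Pi.smul_apply, Pi.sub_apply, smul_eq_mul]

end Main

/-- If a continuous linear operator `A` on `ω = ℝ^ℕ` generates a
strongly continuous semigroup, then so does `A²`. -/
theorem stmt12 (A : (ℕ → ℝ) →L[ℝ] (ℕ → ℝ))
    (hgen : ∃ T : ℝ → (ℕ → ℝ) →L[ℝ] (ℕ → ℝ),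
      T 0 = ContinuousLinearMap.id ℝ (ℕ → ℝ) ∧
      (∀ s t : ℝ, 0 ≤ s → 0 ≤ t → T (s + t) = (T s).comp (T t)) ∧
      (∀ x : ℕ → ℝ, ContinuousOn (fun t : ℝ => T t x) (Set.Ici 0)) ∧
      ∀ x : ℕ → ℝ,
        Tendsto (fun h : ℝ => h⁻¹ • (T h x - x)) (𝓝[>] 0) (𝓝 (A x))) :
    ∃ S : ℝ → (ℕ → ℝ) →L[ℝ] (ℕ → ℝ),
      S 0 = ContinuousLinearMap.id ℝ (ℕ → ℝ) ∧
      (∀ s t : ℝ, 0 ≤ s → 0 ≤ t → S (s + t) = (S s).comp (S t)) ∧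
      (∀ x : ℕ → ℝ, ContinuousOn (fun t : ℝ => S t x) (Set.Ici 0)) ∧
      ∀ x : ℕ → ℝ,
        Tendsto (fun h : ℝ => h⁻¹ • (S h x - x)) (𝓝[>] 0) (𝓝 ((A ^ 2) x)) := by
  obtain ⟨T, hT0, hsg, hcont, hgenA⟩ := hgen
  have hsuppA : ∀ n : ℕ, ∃ F : Finset ℕ, ∀ x : ℕ → ℝ,
      (∀ m ∈ F, x m = 0) → ∀ k : ℕ, ((A ^ k) x) n = 0 := by
    intro n
    obtain ⟨F, hF⟩ := equi T hcont n
    exact ⟨F, zeroprop A T hT0 hsg hgenA n F hF⟩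
  have hbdA : ∀ (n : ℕ) (x : ℕ → ℝ), ∃ C R : ℝ, 0 ≤ C ∧ 1 ≤ R ∧
      ∀ k : ℕ, |((A ^ k) x) n| ≤ C * R ^ k := by
    intro n x
    obtain ⟨F, hF⟩ := hsuppA n
    obtain ⟨p, hp, c, hrec⟩ := exists_recurrence hF
    exact growth A n p hp c hrec x
  have hsuppB : ∀ n : ℕ, ∃ F : Finset ℕ, ∀ x : ℕ → ℝ,
      (∀ m ∈ F, x m = 0) → ∀ k : ℕ, (((A ^ 2) ^ k) x) n = 0 := by
    intro n
    obtain ⟨F, hF⟩ := hsuppA n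
    refine ⟨F, fun x hx k => ?_⟩
    rw [← pow_mul]
    exact hF x hx (2 * k)
  have hbdB : ∀ (n : ℕ) (x : ℕ → ℝ), ∃ C R : ℝ, 0 ≤ C ∧ 1 ≤ R ∧
      ∀ k : ℕ, |(((A ^ 2) ^ k) x) n| ≤ C * R ^ k := by
    intro n x
    obtain ⟨C, R, hC, hR, h⟩ := hbdA n x
    refine ⟨C, R ^ 2, hC, one_le_pow₀ hR, fun k => ?_⟩
    rw [← pow_mul, ← pow_mul]
    exact h (2 * k)
  exact ⟨SCL (A ^ 2) hbdB hsuppB, SCL_zero hbdB hsuppB,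
    fun s t _ _ => SCL_semigroup hbdB hsuppB s t,
    fun x => (SCL_orbit_continuous hbdB hsuppB x).continuousOn,
    fun x => SCL_generator hbdB hsuppB x⟩
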